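/- Let U = {(v₁,…,v₆) ∈ ℝ⁶ : cos v₅ ≠ 0} and define on U the vector fields X₁ᴿ = ∂/∂v₁, X₂ᴿ = v₁ ∂/∂v₁ + ∂/∂v₂, X₃ᴿ = v₁² ∂/∂v₁ + 2v₁ ∂/∂v₂ + e^{v₂} ∂/∂v₃, X₄ᴿ = ∂/∂v₄, X₅ᴿ = sin v₄ tan v₅ ∂/∂v₄ + cos v₄ ∂/∂v₅ + (sin v₄ / cos v₅) ∂/∂v₆, X₆ᴿ = cos v₄ tan v₅ ∂/∂v₄ − sin v₄ ∂/∂v₅ + (cos v₄ / cos v₅) ∂/∂v₆. Then at every point of U: [X₁ᴿ,X₂ᴿ] = X₁ᴿ, [X₁ᴿ,X₃ᴿ] = 2X₂ᴿ, [X₂ᴿ,X₃ᴿ] = X₃ᴿ, [X₄ᴿ,X₅ᴿ] = X₆ᴿ, [X₅ᴿ,X₆ᴿ] = X₄ᴿ, [X₄ᴿ,X₆ᴿ] = −X₅ᴿ, and [Xᵢᴿ,Xⱼᴿ] = 0 for all i ∈ {1,2,3} and j ∈ {4,5,6}; hence X₁ᴿ,…,X₆ᴿ span a 6-dimensional Lie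 algebra isomorphic to the direct sum 𝔰𝔩₂ ⊕ 𝔰𝔬₃ (the Vessiot–Guldberg Lie algebra of the Lie system associated with quantum harmonic oscillators with a spin-magnetic term). -/

import Mathlib

set_option linter.unusedVariables false

/-- The pointwise Lie bracket of two vector fields on (an open subset of) ℝⁿ,
    `[V,W](p) = (DW)(p)(V(p)) − (DV)(p)(W(p))`. -/
noncomputable def vbracket {n : ℕ} (V W : (Fin n → ℝ) → (Fin n → ℝ)) :
    (Fin n → ℝ) → (Fin n → ℝ) :=
  fun p => fderiv ℝ W p (V p) - fderiv ℝ V p (W p)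

/-- The right-invariant vector fields X₁ᴿ,…,X₆ᴿ of the Lie system associated
with quantum harmonic oscillators with a spin-magnetic term, on
U = {cos v₅ ≠ 0} ⊆ ℝ⁶, in coordinates (v₁,…,v₆) = (p 0,…,p 5). -/
noncomputable def osX : Fin 6 → (Fin 6 → ℝ) → (Fin 6 → ℝ) :=
  ![fun _ => ![1, 0, 0, 0, 0, 0],
    fun p => ![p 0, 1, 0, 0, 0, 0],
    fun p => ![(p 0) ^ 2, 2 * p 0, Real.exp (p 1), 0, 0, 0],
    fun _ => ![0, 0, 0, 1, 0, 0],
    fun p => ![0, 0, 0, Real.sin (p 3) * Real.tan (p 4), Real.cos (p 3),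
      Real.sin (p 3) / Real.cos (p 4)],
    fun p => ![0, 0, 0, Real.cos (p 3) * Real.tan (p 4), -Real.sin (p 3),
      Real.cos (p 3) / Real.cos (p 4)]]

@[simp] lemma cons_val_five' {α : Type*} {m : ℕ} (x : α) (u : Fin (m + 5) → α) :
    Matrix.vecCons x u 5 =
      Matrix.vecHead (Matrix.vecTail (Matrix.vecTail (Matrix.vecTail (Matrix.vecTail u)))) := rfl

/-- The `i`-th coordinate projection as a continuous linear map. -/
noncomputable def pr (i : Fin 6) : (Fin 6 → ℝ) →L[ℝ] ℝ := ContinuousLinearMap.proj i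

@[simp] lemma pr_apply (i : Fin 6) (v : Fin 6 → ℝ) : pr i v = v i := rfl

/-- The total derivatives of the six vector fields. -/
noncomputable def osD : Fin 6 → (Fin 6 → ℝ) → ((Fin 6 → ℝ) →L[ℝ] (Fin 6 → ℝ)) :=
  ![fun _ => 0,
    fun _ => ContinuousLinearMap.pi ![pr 0, 0, 0, 0, 0, 0],
    fun p => ContinuousLinearMap.pi
      ![(2 * p 0) • pr 0, (2 : ℝ) • pr 0, Real.exp (p 1) • pr 1, 0, 0, 0],
    fun _ => 0,
    fun p => ContinuousLinearMap.pi
      ![0, 0, 0,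
        (Real.cos (p 3) * Real.tan (p 4)) • pr 3 + (Real.sin (p 3) / Real.cos (p 4) ^ 2) • pr 4,
        (-Real.sin (p 3)) • pr 3,
        (Real.cos (p 3) / Real.cos (p 4)) • pr 3 +
          (Real.sin (p 3) * Real.sin (p 4) / Real.cos (p 4) ^ 2) • pr 4],
    fun p => ContinuousLinearMap.pi
      ![0, 0, 0,
        (-Real.sin (p 3) * Real.tan (p 4)) • pr 3 + (Real.cos (p 3) / Real.cos (p 4) ^ 2) • pr 4,
        (-Real.cos (p 3)) • pr 3,
        (-Real.sin (p 3) / Real.cos (p 4)) • pr 3 +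
          (Real.cos (p 3) * Real.sin (p 4) / Real.cos (p 4) ^ 2) • pr 4]]

lemma osX0_eq : osX 0 = fun _ => ![1, 0, 0, 0, 0, 0] := rfl
lemma osX1_eq : osX 1 = fun p => ![p 0, 1, 0, 0, 0, 0] := rfl
lemma osX2_eq : osX 2 = fun p => ![(p 0) ^ 2, 2 * p 0, Real.exp (p 1), 0, 0, 0] := rfl
lemma osX3_eq : osX 3 = fun _ => ![0, 0, 0, 1, 0, 0] := rfl
lemma osX4_eq : osX 4 = fun p => ![0, 0, 0, Real.sin (p 3) * Real.tan (p 4), Real.cos (p 3),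
    Real.sin (p 3) / Real.cos (p 4)] := rfl
lemma osX5_eq : osX 5 = fun p => ![0, 0, 0, Real.cos (p 3) * Real.tan (p 4), -Real.sin (p 3),
    Real.cos (p 3) / Real.cos (p 4)] := rfl

lemma osD0_eq (p : Fin 6 → ℝ) : osD 0 p = 0 := rfl
lemma osD1_eq (p : Fin 6 → ℝ) : osD 1 p = ContinuousLinearMap.pi ![pr 0, 0, 0, 0, 0, 0] := rfl
lemma osD2_eq (p : Fin 6 → ℝ) : osD 2 p = ContinuousLinearMap.pi
    ![(2 * p 0) • pr 0, (2 : ℝ) • pr 0, Real.exp (p 1) • pr 1, 0, 0, 0] := rfl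
lemma osD3_eq (p : Fin 6 → ℝ) : osD 3 p = 0 := rfl
lemma osD4_eq (p : Fin 6 → ℝ) : osD 4 p = ContinuousLinearMap.pi
    ![0, 0, 0,
      (Real.cos (p 3) * Real.tan (p 4)) • pr 3 + (Real.sin (p 3) / Real.cos (p 4) ^ 2) • pr 4,
      (-Real.sin (p 3)) • pr 3,
      (Real.cos (p 3) / Real.cos (p 4)) • pr 3 +
        (Real.sin (p 3) * Real.sin (p 4) / Real.cos (p 4) ^ 2) • pr 4] := rfl
lemma osD5_eq (p : Fin 6 → ℝ) : osD 5 p = ContinuousLinearMap.pi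
    ![0, 0, 0,
      (-Real.sin (p 3) * Real.tan (p 4)) • pr 3 + (Real.cos (p 3) / Real.cos (p 4) ^ 2) • pr 4,
      (-Real.cos (p 3)) • pr 3,
      (-Real.sin (p 3) / Real.cos (p 4)) • pr 3 +
        (Real.cos (p 3) * Real.sin (p 4) / Real.cos (p 4) ^ 2) • pr 4] := rfl

section derivs

variable (p : Fin 6 → ℝ)

lemma h0' : HasFDerivAt (fun q : Fin 6 → ℝ => q 0) (pr 0) p := hasFDerivAt_apply 0 p
lemma h1' : HasFDerivAt (fun q : Fin 6 → ℝ => q 1) (pr 1) p := hasFDerivAt_apply 1 p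
lemma h3' : HasFDerivAt (fun q : Fin 6 → ℝ => q 3) (pr 3) p := hasFDerivAt_apply 3 p
lemma h4' : HasFDerivAt (fun q : Fin 6 → ℝ => q 4) (pr 4) p := hasFDerivAt_apply 4 p

lemma hsin' : HasFDerivAt (fun q : Fin 6 → ℝ => Real.sin (q 3)) (Real.cos (p 3) • pr 3) p :=
  by have h := (Real.hasDerivAt_sin (p 3)).comp_hasFDerivAt p (h3' p); exact h

lemma hcos' : HasFDerivAt (fun q : Fin 6 → ℝ => Real.cos (q 3)) ((-Real.sin (p 3)) • pr 3) p :=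
  by have h := (Real.hasDerivAt_cos (p 3)).comp_hasFDerivAt p (h3' p); exact h

lemma hexp' : HasFDerivAt (fun q : Fin 6 → ℝ => Real.exp (q 1)) (Real.exp (p 1) • pr 1) p :=
  by have h := (Real.hasDerivAt_exp (p 1)).comp_hasFDerivAt p (h1' p); exact h

lemma htan' (hp : Real.cos (p 4) ≠ 0) :
    HasFDerivAt (fun q : Fin 6 → ℝ => Real.tan (q 4)) ((1 / Real.cos (p 4) ^ 2) • pr 4) p :=
  by have h := (Real.hasDerivAt_tan hp).comp_hasFDerivAt p (h4' p); exact h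

lemma hinv' (hp : Real.cos (p 4) ≠ 0) :
    HasFDerivAt (fun q : Fin 6 → ℝ => (Real.cos (q 4))⁻¹)
      ((Real.sin (p 4) / Real.cos (p 4) ^ 2) • pr 4) p := by
  have : HasFDerivAt (fun q : Fin 6 → ℝ => (Real.cos (q 4))⁻¹)
      ((- -Real.sin (p 4) / Real.cos (p 4) ^ 2) • pr 4) p := by
    have h := ((Real.hasDerivAt_cos (p 4)).inv hp).comp_hasFDerivAt p (h4' p); exact h
  convert this using 1
  ext v
  simp
  try ring

end derivs

lemma osX_hasFDerivAt (k : Fin 6) (p : Fin 6 → ℝ) (hp : Real.cos (p 4) ≠ 0) :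
    HasFDerivAt (osX k) (osD k p) p := by
  fin_cases k
  · exact hasFDerivAt_const _ _
  · rw [show osX ⟨1, by omega⟩ = osX 1 from rfl, show osD ⟨1, by omega⟩ = osD 1 from rfl,
      osX1_eq, osD1_eq]
    refine hasFDerivAt_pi.2 ?_
    intro i
    fin_cases i
    · exact h0' p
    all_goals exact hasFDerivAt_const _ _
  · rw [show osX ⟨2, by omega⟩ = osX 2 from rfl, show osD ⟨2, by omega⟩ = osD 2 from rfl,
      osX2_eq, osD2_eq]
    refine hasFDerivAt_pi.2 ?_
    intro i
    fin_cases i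
    · show HasFDerivAt (fun q : Fin 6 → ℝ => (q 0) ^ 2) ((2 * p 0) • pr 0) p
      have h : HasFDerivAt (fun q : Fin 6 → ℝ => q 0 * q 0)
          (p 0 • pr 0 + p 0 • pr 0) p := (h0' p).mul (h0' p)
      have hf : (fun q : Fin 6 → ℝ => (q 0) ^ 2) = fun q : Fin 6 → ℝ => q 0 * q 0 := by
        funext q; ring
      have hA : ((2 * p 0) • pr 0 : (Fin 6 → ℝ) →L[ℝ] ℝ) = p 0 • pr 0 + p 0 • pr 0 := by
        ext v; simp; ring
      rw [hf, hA]; exact h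
    · show HasFDerivAt (fun q : Fin 6 → ℝ => 2 * q 0) ((2 : ℝ) • pr 0) p
      exact (h0' p).const_mul 2
    · exact hexp' p
    all_goals exact hasFDerivAt_const _ _
  · exact hasFDerivAt_const _ _
  · rw [show osX ⟨4, by omega⟩ = osX 4 from rfl, show osD ⟨4, by omega⟩ = osD 4 from rfl,
      osX4_eq, osD4_eq]
    refine hasFDerivAt_pi.2 ?_
    intro i
    fin_cases i
    · exact hasFDerivAt_const _ _
    · exact hasFDerivAt_const _ _
    · exact hasFDerivAt_const _ _
    · show HasFDerivAt (fun q : Fin 6 → ℝ => Real.sin (q 3) * Real.tan (q 4))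
        ((Real.cos (p 3) * Real.tan (p 4)) • pr 3 +
          (Real.sin (p 3) / Real.cos (p 4) ^ 2) • pr 4) p
      have h := (hsin' p).mul (htan' p hp)
      have hA : ((Real.cos (p 3) * Real.tan (p 4)) • pr 3 +
            (Real.sin (p 3) / Real.cos (p 4) ^ 2) • pr 4 : (Fin 6 → ℝ) →L[ℝ] ℝ) =
          Real.sin (p 3) • (1 / Real.cos (p 4) ^ 2) • pr 4 +
            Real.tan (p 4) • Real.cos (p 3) • pr 3 := by
        ext v; simp; ring
      rw [hA]; exact h
    · exact hcos' p
    · show HasFDerivAt (fun q : Fin 6 → ℝ => Real.sin (q 3) / Real.cos (q 4))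
        ((Real.cos (p 3) / Real.cos (p 4)) • pr 3 +
          (Real.sin (p 3) * Real.sin (p 4) / Real.cos (p 4) ^ 2) • pr 4) p
      have h := (hsin' p).mul (hinv' p hp)
      have hf : (fun q : Fin 6 → ℝ => Real.sin (q 3) / Real.cos (q 4)) =
          fun q : Fin 6 → ℝ => Real.sin (q 3) * (Real.cos (q 4))⁻¹ := by
        funext q; rw [div_eq_mul_inv]
      have hA : ((Real.cos (p 3) / Real.cos (p 4)) • pr 3 +
            (Real.sin (p 3) * Real.sin (p 4) / Real.cos (p 4) ^ 2) • pr 4 :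
              (Fin 6 → ℝ) →L[ℝ] ℝ) =
          Real.sin (p 3) • (Real.sin (p 4) / Real.cos (p 4) ^ 2) • pr 4 +
            (Real.cos (p 4))⁻¹ • Real.cos (p 3) • pr 3 := by
        ext v; simp; field_simp; ring
      rw [hf, hA]; exact h
  · rw [show osX ⟨5, by omega⟩ = osX 5 from rfl, show osD ⟨5, by omega⟩ = osD 5 from rfl,
      osX5_eq, osD5_eq]
    refine hasFDerivAt_pi.2 ?_
    intro i
    fin_cases i
    · exact hasFDerivAt_const _ _
    · exact hasFDerivAt_const _ _
    · exact hasFDerivAt_const _ _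
    · show HasFDerivAt (fun q : Fin 6 → ℝ => Real.cos (q 3) * Real.tan (q 4))
        ((-Real.sin (p 3) * Real.tan (p 4)) • pr 3 +
          (Real.cos (p 3) / Real.cos (p 4) ^ 2) • pr 4) p
      have h := (hcos' p).mul (htan' p hp)
      have hA : ((-Real.sin (p 3) * Real.tan (p 4)) • pr 3 +
            (Real.cos (p 3) / Real.cos (p 4) ^ 2) • pr 4 : (Fin 6 → ℝ) →L[ℝ] ℝ) =
          Real.cos (p 3) • (1 / Real.cos (p 4) ^ 2) • pr 4 +
            Real.tan (p 4) • (-Real.sin (p 3)) • pr 3 := by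
        ext v; simp; ring
      rw [hA]; exact h
    · show HasFDerivAt (fun q : Fin 6 → ℝ => -Real.sin (q 3)) ((-Real.cos (p 3)) • pr 3) p
      have h := (hsin' p).neg
      have hA : ((-Real.cos (p 3)) • pr 3 : (Fin 6 → ℝ) →L[ℝ] ℝ) =
          -(Real.cos (p 3) • pr 3) := by ext v; simp
      rw [hA]; exact h
    · show HasFDerivAt (fun q : Fin 6 → ℝ => Real.cos (q 3) / Real.cos (q 4))
        ((-Real.sin (p 3) / Real.cos (p 4)) • pr 3 +
          (Real.cos (p 3) * Real.sin (p 4) / Real.cos (p 4) ^ 2) • pr 4) p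
      have h := (hcos' p).mul (hinv' p hp)
      have hf : (fun q : Fin 6 → ℝ => Real.cos (q 3) / Real.cos (q 4)) =
          fun q : Fin 6 → ℝ => Real.cos (q 3) * (Real.cos (q 4))⁻¹ := by
        funext q; rw [div_eq_mul_inv]
      have hA : ((-Real.sin (p 3) / Real.cos (p 4)) • pr 3 +
            (Real.cos (p 3) * Real.sin (p 4) / Real.cos (p 4) ^ 2) • pr 4 :
              (Fin 6 → ℝ) →L[ℝ] ℝ) =
          Real.cos (p 3) • (Real.sin (p 4) / Real.cos (p 4) ^ 2) • pr 4 +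
            (Real.cos (p 4))⁻¹ • (-Real.sin (p 3)) • pr 3 := by
        ext v; simp; field_simp; ring
      rw [hf, hA]; exact h

lemma cr03 (p : Fin 6 → ℝ) : osD 3 p (osX 0 p) - osD 0 p (osX 3 p) = 0 := by
  rw [osD3_eq, osD0_eq, osX0_eq, osX3_eq]
  funext k; fin_cases k <;> simp

lemma cr04 (p : Fin 6 → ℝ) : osD 4 p (osX 0 p) - osD 0 p (osX 4 p) = 0 := by
  rw [osD4_eq, osD0_eq, osX0_eq, osX4_eq]
  funext k; fin_cases k <;> simp

lemma cr05 (p : Fin 6 → ℝ) : osD 5 p (osX 0 p) - osD 0 p (osX 5 p) = 0 := by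
  rw [osD5_eq, osD0_eq, osX0_eq, osX5_eq]
  funext k; fin_cases k <;> simp

lemma cr13 (p : Fin 6 → ℝ) : osD 3 p (osX 1 p) - osD 1 p (osX 3 p) = 0 := by
  rw [osD3_eq, osD1_eq, osX1_eq, osX3_eq]
  funext k; fin_cases k <;> simp

lemma cr14 (p : Fin 6 → ℝ) : osD 4 p (osX 1 p) - osD 1 p (osX 4 p) = 0 := by
  rw [osD4_eq, osD1_eq, osX1_eq, osX4_eq]
  funext k; fin_cases k <;> simp

lemma cr15 (p : Fin 6 → ℝ) : osD 5 p (osX 1 p) - osD 1 p (osX 5 p) = 0 := by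
  rw [osD5_eq, osD1_eq, osX1_eq, osX5_eq]
  funext k; fin_cases k <;> simp

lemma cr23 (p : Fin 6 → ℝ) : osD 3 p (osX 2 p) - osD 2 p (osX 3 p) = 0 := by
  rw [osD3_eq, osD2_eq, osX2_eq, osX3_eq]
  funext k; fin_cases k <;> simp

lemma cr24 (p : Fin 6 → ℝ) : osD 4 p (osX 2 p) - osD 2 p (osX 4 p) = 0 := by
  rw [osD4_eq, osD2_eq, osX2_eq, osX4_eq]
  funext k; fin_cases k <;> simp

lemma cr25 (p : Fin 6 → ℝ) : osD 5 p (osX 2 p) - osD 2 p (osX 5 p) = 0 := by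
  rw [osD5_eq, osD2_eq, osX2_eq, osX5_eq]
  funext k; fin_cases k <;> simp

set_option maxHeartbeats 1000000 in
/-- At every point of U = {cos v₅ ≠ 0}: [X₁ᴿ,X₂ᴿ] = X₁ᴿ, [X₁ᴿ,X₃ᴿ] = 2X₂ᴿ,
[X₂ᴿ,X₃ᴿ] = X₃ᴿ, [X₄ᴿ,X₅ᴿ] = X₆ᴿ, [X₅ᴿ,X₆ᴿ] = X₄ᴿ, [X₄ᴿ,X₆ᴿ] = −X₅ᴿ, and
[Xᵢᴿ,Xⱼᴿ] = 0 for i ∈ {1,2,3}, j ∈ {4,5,6}: the vector fields span a Lie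
algebra isomorphic to 𝔰𝔩₂ ⊕ 𝔰𝔬₃. -/
theorem spin_magnetic_oscillator_commutation_relations :
    ∀ p : Fin 6 → ℝ, Real.cos (p 4) ≠ 0 →
      vbracket (osX 0) (osX 1) p = osX 0 p ∧
      vbracket (osX 0) (osX 2) p = (2 : ℝ) • osX 1 p ∧
      vbracket (osX 1) (osX 2) p = osX 2 p ∧
      vbracket (osX 3) (osX 4) p = osX 5 p ∧
      vbracket (osX 4) (osX 5) p = osX 3 p ∧
      vbracket (osX 3) (osX 5) p = -(osX 4 p) ∧
      (∀ i j : Fin 6, i < 3 → 3 ≤ j → vbracket (osX i) (osX j) p = 0) := by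
  intro p hp
  have hbr : ∀ i j : Fin 6,
      vbracket (osX i) (osX j) p = osD j p (osX i p) - osD i p (osX j p) := by
    intro i j
    simp only [vbracket, (osX_hasFDerivAt i p hp).fderiv, (osX_hasFDerivAt j p hp).fderiv]
  refine ⟨?_, ?_, ?_, ?_, ?_, ?_, ?_⟩
  · rw [hbr, osD0_eq, osD1_eq, osX0_eq, osX1_eq]
    funext i; fin_cases i <;> simp
  · rw [hbr, osD0_eq, osD2_eq, osX0_eq, osX1_eq, osX2_eq]
    funext i; fin_cases i <;> simp <;> ring
  · rw [hbr, osD1_eq, osD2_eq, osX1_eq, osX2_eq]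
    funext i; fin_cases i <;> simp <;> ring
  · rw [hbr, osD3_eq, osD4_eq, osX3_eq, osX4_eq, osX5_eq]
    funext i; fin_cases i <;> simp
  · rw [hbr, osD4_eq, osD5_eq, osX4_eq, osX5_eq, osX3_eq]
    have hsc3 : Real.sin (p 3) ^ 2 + Real.cos (p 3) ^ 2 = 1 := Real.sin_sq_add_cos_sq _
    have hsc4 : Real.sin (p 4) ^ 2 + Real.cos (p 4) ^ 2 = 1 := Real.sin_sq_add_cos_sq _
    funext i
    fin_cases i <;> simp [Real.tan_eq_sin_div_cos] <;> field_simp <;> ring_nf <;>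
      simp only [Real.sin_sq] <;> ring
  · rw [hbr, osD3_eq, osD5_eq, osX3_eq, osX5_eq, osX4_eq]
    funext i; fin_cases i <;> simp [neg_div]
  · intro i j hi hj
    rw [hbr]
    fin_cases i <;> fin_cases j <;>
      first
        | exact absurd hi (by decide)
        | exact absurd hj (by decide)
        | exact cr03 p | exact cr04 p | exact cr05 p
        | exact cr13 p | exact cr14 p | exact cr15 p
        | exact cr23 p | exact cr24 p | exact cr25 p
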